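/- Let d ≥ 2 and let μ₁ < μ₂ < ⋯ < μ_{d+1} be positive squarefree integers, and let 1 ≤ ν ≤ d+1. Then the group of matrices γ ∈ GL(2,ℚ) satisfying Q∘γ = Q, where Q(X,Y) = ∏_{1≤n≤d+1, n≠ν}(X² + μ_n Y²), is exactly the Klein group {(±1 0; 0 ±1)} of order 4. -/

import Mathlib

lemma aux_pow_one (t : ℚ) (ht : 0 ≤ t) {k : ℕ} (hk : k ≠ 0) (h : t ^ k = 1) : t = 1 := by
  rcases lt_trichotomy t 1 with h1 | h1 | h1
  · have := pow_lt_one₀ ht h1 hk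
    linarith
  · exact h1
  · have := one_lt_pow₀ h1 hk
    linarith

lemma aux_sqfree (m n : ℤ) (hm : Squarefree m) (hn : Squarefree n) (r : ℚ)
    (h : (m : ℚ) * r ^ 2 = n) : m = n := by
  have hden : ((r.den : ℚ)) ≠ 0 := by exact_mod_cast r.den_nz
  have hr : (r.num : ℚ) = r * r.den := (div_eq_iff hden).mp (Rat.num_div_den r)
  have hint : m * r.num ^ 2 = n * (r.den : ℤ) ^ 2 := by
    have h2 : (m : ℚ) * (r.num : ℚ) ^ 2 = (n : ℚ) * ((r.den : ℤ) : ℚ) ^ 2 := by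
      rw [hr]; push_cast; linear_combination ((r.den : ℚ)) ^ 2 * h
    exact_mod_cast h2
  have hcop : IsCoprime (r.num) ((r.den : ℤ)) := by
    rw [Int.isCoprime_iff_gcd_eq_one]; exact_mod_cast r.reduced
  have hp2 : r.num ^ 2 ∣ n := by
    have h1 : r.num ^ 2 ∣ n * (r.den : ℤ) ^ 2 := ⟨m, by linear_combination -hint⟩
    exact (hcop.pow).dvd_of_dvd_mul_right h1
  have hq2 : ((r.den : ℤ)) ^ 2 ∣ m := by
    have h1 : ((r.den : ℤ)) ^ 2 ∣ m * r.num ^ 2 := ⟨n, by linear_combination hint⟩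
    exact (hcop.symm.pow).dvd_of_dvd_mul_right h1
  have hu1 : IsUnit r.num := hn r.num (by simpa [pow_two] using hp2)
  have hu2 : IsUnit ((r.den : ℤ)) := hm _ (by simpa [pow_two] using hq2)
  have h1 : r.num ^ 2 = 1 := by rcases Int.isUnit_iff.mp hu1 with h' | h' <;> simp [h']
  have h2 : ((r.den : ℤ)) ^ 2 = 1 := by rcases Int.isUnit_iff.mp hu2 with h' | h' <;> simp [h']
  rw [h1, h2] at hint
  linarith

/-- For d ≥ 2 and positive squarefree strictly increasing μ₁ < ⋯ < μ_{d+1},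
the automorphisms in GL(2,ℚ) of Q(X,Y) = ∏_{n≠ν}(X² + μ_n Y²) are exactly the
four matrices (±1 0; 0 ±1) (Klein group of order 4). -/
theorem stmt_8 (d : ℕ) (hd : 2 ≤ d) (μ : Fin (d + 1) → ℤ)
    (hμpos : ∀ n, 0 < μ n) (hμsf : ∀ n, Squarefree (μ n)) (hμmono : StrictMono μ)
    (ν : Fin (d + 1)) (M : Matrix (Fin 2) (Fin 2) ℚ) (hdet : M.det ≠ 0) :
    (∀ x y : ℚ,
        ∏ n ∈ Finset.univ.erase ν,
            ((M 0 0 * x + M 0 1 * y) ^ 2 + (μ n : ℚ) * (M 1 0 * x + M 1 1 * y) ^ 2) =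
          ∏ n ∈ Finset.univ.erase ν, (x ^ 2 + (μ n : ℚ) * y ^ 2)) ↔
      (M = !![1, 0; 0, 1] ∨ M = !![-1, 0; 0, -1] ∨ M = !![1, 0; 0, -1] ∨ M = !![-1, 0; 0, 1]) := by
  constructor
  · intro h
    set S : Finset (Fin (d + 1)) := Finset.univ.erase ν with hS
    set a := M 0 0 with haM
    set b := M 0 1 with hbM
    set c := M 1 0 with hcM
    set e := M 1 1 with heM
    have hdet' : a * e - b * c ≠ 0 := by
      rw [haM, hbM, hcM, heM]; rwa [Matrix.det_fin_two] at hdet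
    have hcard : S.card = d := by
      rw [hS, Finset.card_erase_of_mem (Finset.mem_univ ν)]
      simp
    obtain ⟨n₁, hn₁, n₂, hn₂, hne12⟩ := Finset.one_lt_card.mp
      (by omega : 1 < S.card)
    have hμQ : ∀ n, (0:ℚ) < (μ n : ℚ) := fun n => by exact_mod_cast hμpos n
    -- extend identity to ℂ via polynomials
    have hzfact : ∀ z : ℂ,
        ∏ n ∈ S, (((a:ℂ) * z + (b:ℂ)) ^ 2 + (μ n : ℂ) * ((c:ℂ) * z + (e:ℂ)) ^ 2)
          = ∏ n ∈ S, (z ^ 2 + (μ n : ℂ)) := by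
      have hpoly : (∏ n ∈ S,
          ((Polynomial.C a * Polynomial.X + Polynomial.C b) ^ 2
            + Polynomial.C ((μ n : ℚ)) * (Polynomial.C c * Polynomial.X + Polynomial.C e) ^ 2)
            : Polynomial ℚ) =
          ∏ n ∈ S, (Polynomial.X ^ 2 + Polynomial.C ((μ n : ℚ))) := by
        apply Polynomial.funext
        intro x
        simp only [Polynomial.eval_prod, Polynomial.eval_add, Polynomial.eval_mul,
          Polynomial.eval_pow, Polynomial.eval_C, Polynomial.eval_X]
        simpa using h x 1
      intro z
      have := congrArg (fun p => Polynomial.aeval z p) hpoly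
      simpa [map_prod, Polynomial.aeval_C, eq_ratCast] using this
    -- the key local relations
    have hmain : ∀ n₀ ∈ S, ∃ m ∈ S,
        (a * b + (μ m : ℚ) * c * e = 0) ∧
        (b ^ 2 - (μ n₀ : ℚ) * a ^ 2 + (μ m : ℚ) * e ^ 2
          - (μ m : ℚ) * (μ n₀ : ℚ) * c ^ 2 = 0) := by
      intro n₀ hn₀
      set s : ℝ := Real.sqrt (μ n₀) with hsdef
      have hμR : (0:ℝ) < (μ n₀ : ℝ) := by exact_mod_cast hμpos n₀
      have hs2 : s ^ 2 = (μ n₀ : ℝ) := Real.sq_sqrt hμR.le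
      have hsC : ((s:ℂ)) ^ 2 = ((μ n₀ : ℤ) : ℂ) := by
        exact_mod_cast congrArg (fun t : ℝ => (t : ℂ)) hs2
      have hzero : ∏ n ∈ S,
          (((a:ℂ) * ((s:ℂ) * Complex.I) + (b:ℂ)) ^ 2
            + (μ n : ℂ) * ((c:ℂ) * ((s:ℂ) * Complex.I) + (e:ℂ)) ^ 2) = 0 := by
        rw [hzfact]
        apply Finset.prod_eq_zero hn₀
        rw [mul_pow, Complex.I_sq, hsC]; ring
      obtain ⟨m, hmS, hfac⟩ := Finset.prod_eq_zero_iff.mp hzero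
      refine ⟨m, hmS, ?_⟩
      set z : ℂ := (s:ℂ) * Complex.I with hz
      have hz2 : z ^ 2 + ((μ n₀ : ℤ) : ℂ) = 0 := by
        rw [hz, mul_pow, Complex.I_sq, hsC]; ring
      set A : ℚ := b ^ 2 - (μ n₀ : ℚ) * a ^ 2 + (μ m : ℚ) * e ^ 2
        - (μ m : ℚ) * (μ n₀ : ℚ) * c ^ 2 with hA
      set B : ℚ := a * b + (μ m : ℚ) * c * e with hB
      have hAB : (A : ℂ) + 2 * (B : ℂ) * z = 0 := by
        rw [hA, hB]
        push_cast
        linear_combination hfac - ((a:ℂ) ^ 2 + ((μ m : ℤ):ℂ) * (c:ℂ) ^ 2) * hz2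
      have hsq : (A : ℂ) ^ 2 + 4 * (B : ℂ) ^ 2 * ((μ n₀ : ℤ) : ℂ) = 0 := by
        linear_combination ((A:ℂ) - 2 * (B:ℂ) * z) * hAB + 4 * (B:ℂ) ^ 2 * hz2
      have hq : A ^ 2 + 4 * B ^ 2 * (μ n₀ : ℚ) = 0 := by exact_mod_cast hsq
      have hnnQ := hμQ n₀
      have hA0 : A = 0 := by nlinarith [sq_nonneg A, sq_nonneg B]
      have hB2 : B ^ 2 * (4 * (μ n₀ : ℚ)) = 0 := by linear_combination hq - A * hA0
      have hB0 : B = 0 := by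
        rcases mul_eq_zero.mp hB2 with h' | h'
        · exact pow_eq_zero_iff (by norm_num) |>.mp h'
        · exfalso; nlinarith
      exact ⟨hB0, hA0⟩
    -- case analysis: show b = 0 and c = 0
    have hμne : ∀ {i j : Fin (d+1)}, (μ i : ℚ) = (μ j : ℚ) → i = j := by
      intro i j hij
      exact hμmono.injective (by exact_mod_cast hij)
    have hbc : b = 0 ∧ c = 0 := by
      by_cases hc0 : c = 0
      · refine ⟨?_, hc0⟩
        obtain ⟨m, hmS, hB, _⟩ := hmain n₁ hn₁
        rw [hc0] at hB hdet'
        have ha : a ≠ 0 := fun h' => hdet' (by rw [h']; ring)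
        have hab : a * b = 0 := by linear_combination hB
        rcases mul_eq_zero.mp hab with h' | h'
        · exact absurd h' ha
        · exact h'
      · exfalso
        by_cases he0 : e = 0
        · -- c ≠ 0, e = 0 : impossible
          have hb : b ≠ 0 := fun h' => hdet' (by rw [h', he0]; ring)
          have key : ∀ n₀ ∈ S, b ^ 2 = (μ n₀ : ℚ) ^ 2 * c ^ 2 := by
            intro n₀ hn₀
            obtain ⟨m, hmS, hB, hA⟩ := hmain n₀ hn₀
            rw [he0] at hB hA
            have ha0 : a = 0 := by
              have hab : a * b = 0 := by linear_combination hB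
              rcases mul_eq_zero.mp hab with h' | h'
              · exact h'
              · exact absurd h' hb
            rw [ha0] at hA
            -- hA : b^2 - μ n₀ * 0 + μ m * 0 - μ m * μ n₀ * c^2 = 0
            have hmc : (μ m : ℚ) * c ≠ 0 := mul_ne_zero (ne_of_gt (hμQ m)) hc0
            have hmn : m = n₀ := by
              apply hμmono.injective
              apply aux_sqfree _ _ (hμsf m) (hμsf n₀) (b / ((μ m : ℚ) * c))
              push_cast
              field_simp [ne_of_gt (hμQ m), hc0]
              linear_combination hA
            rw [hmn] at hA
            linear_combination hA
          have k1 := key n₁ hn₁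
          have k2 := key n₂ hn₂
          have hμ12 : (μ n₁ : ℚ) ≠ (μ n₂ : ℚ) := fun h' => hne12 (hμne h')
          have hc2 : (0:ℚ) < c ^ 2 := pow_two_pos_of_ne_zero hc0
          have hsq12 : (μ n₁ : ℚ) ^ 2 = (μ n₂ : ℚ) ^ 2 :=
            mul_right_cancel₀ (ne_of_gt hc2) (by linarith)
          have hfac12 : ((μ n₁ : ℚ) - (μ n₂ : ℚ)) * ((μ n₁ : ℚ) + (μ n₂ : ℚ)) = 0 := by
            linear_combination hsq12
          rcases mul_eq_zero.mp hfac12 with h' | h'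
          · exact hμ12 (by linarith)
          · have := hμQ n₁; have := hμQ n₂; linarith
        · -- c ≠ 0, e ≠ 0 : impossible
          have key : ∀ n₀ ∈ S, a * b + (μ n₀ : ℚ) * c * e = 0 := by
            intro n₀ hn₀
            obtain ⟨m, hmS, hB, hA⟩ := hmain n₀ hn₀
            have ha : a ≠ 0 := by
              intro h'
              rw [h'] at hB
              have : (μ m : ℚ) * (c * e) = 0 := by linear_combination hB
              exact (mul_ne_zero (ne_of_gt (hμQ m)) (mul_ne_zero hc0 he0)) this
            have hfactor : ((μ m : ℚ) * e ^ 2 - (μ n₀ : ℚ) * a ^ 2)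
                * (a ^ 2 + (μ m : ℚ) * c ^ 2) = 0 := by
              linear_combination a ^ 2 * hA + ((μ m : ℚ) * c * e - a * b) * hB
            have hpos : (0:ℚ) < a ^ 2 + (μ m : ℚ) * c ^ 2 := by
              have h1 : (0:ℚ) < a ^ 2 := pow_two_pos_of_ne_zero ha
              have h2 : (0:ℚ) ≤ (μ m : ℚ) * c ^ 2 := mul_nonneg (hμQ m).le (sq_nonneg c)
              linarith
            have hkey : (μ m : ℚ) * e ^ 2 = (μ n₀ : ℚ) * a ^ 2 := by
              rcases mul_eq_zero.mp hfactor with h' | h'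
              · linarith
              · exact absurd h' (ne_of_gt hpos)
            have hmn : m = n₀ := by
              apply hμmono.injective
              apply aux_sqfree _ _ (hμsf m) (hμsf n₀) (e / a)
              push_cast
              field_simp
              linear_combination hkey
            rw [hmn] at hB
            exact hB
          have k1 := key n₁ hn₁
          have k2 := key n₂ hn₂
          have hμ12 : (μ n₁ : ℚ) ≠ (μ n₂ : ℚ) := fun h' => hne12 (hμne h')
          have hce : c * e ≠ 0 := mul_ne_zero hc0 he0
          have : ((μ n₁ : ℚ) - (μ n₂ : ℚ)) * (c * e) = 0 := by linear_combination k1 - k2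
          rcases mul_eq_zero.mp this with h' | h'
          · exact hμ12 (by linarith)
          · exact hce h'
    obtain ⟨hb0, hc0⟩ := hbc
    -- now determine a and e
    have hcard0 : S.card ≠ 0 := by omega
    have ha2 : a ^ 2 = 1 := by
      have h10 := h 1 0
      have e1 : ∏ n ∈ S, ((a * 1 + b * 0) ^ 2 + (μ n : ℚ) * (c * 1 + e * 0) ^ 2)
          = ∏ n ∈ S, a ^ 2 :=
        Finset.prod_congr rfl fun n _ => by rw [hb0, hc0]; ring
      have e2 : ∏ n ∈ S, ((1:ℚ) ^ 2 + (μ n : ℚ) * 0 ^ 2) = ∏ n ∈ S, 1 :=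
        Finset.prod_congr rfl fun n _ => by ring
      rw [e1, e2] at h10
      simp only [Finset.prod_const, one_pow] at h10
      exact aux_pow_one _ (sq_nonneg a) hcard0 h10
    have he2 : e ^ 2 = 1 := by
      have h01 := h 0 1
      have e1 : ∏ n ∈ S, ((a * 0 + b * 1) ^ 2 + (μ n : ℚ) * (c * 0 + e * 1) ^ 2)
          = ∏ n ∈ S, ((μ n : ℚ) * e ^ 2) :=
        Finset.prod_congr rfl fun n _ => by rw [hb0, hc0]; ring
      have e2 : ∏ n ∈ S, ((0:ℚ) ^ 2 + (μ n : ℚ) * 1 ^ 2) = ∏ n ∈ S, (μ n : ℚ) :=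
        Finset.prod_congr rfl fun n _ => by ring
      rw [e1, e2, Finset.prod_mul_distrib, Finset.prod_const] at h01
      have hμprod : ∏ n ∈ S, (μ n : ℚ) ≠ 0 :=
        Finset.prod_ne_zero_iff.mpr fun n _ => ne_of_gt (hμQ n)
      have : (e ^ 2) ^ S.card = 1 := by
        apply mul_left_cancel₀ hμprod
        rw [mul_one]
        exact h01
      exact aux_pow_one _ (sq_nonneg e) hcard0 this
    have ha1 : a = 1 ∨ a = -1 := by
      have : (a - 1) * (a + 1) = 0 := by linear_combination ha2
      rcases mul_eq_zero.mp this with h' | h'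
      · left; linarith
      · right; linarith
    have he1 : e = 1 ∨ e = -1 := by
      have : (e - 1) * (e + 1) = 0 := by linear_combination he2
      rcases mul_eq_zero.mp this with h' | h'
      · left; linarith
      · right; linarith
    rw [Matrix.eta_fin_two M, ← haM, ← hbM, ← hcM, ← heM, hb0, hc0]
    rcases ha1 with h1 | h1 <;> rcases he1 with h2 | h2 <;> rw [h1, h2]
    · exact Or.inl rfl
    · exact Or.inr (Or.inr (Or.inl rfl))
    · exact Or.inr (Or.inr (Or.inr rfl))
    · exact Or.inr (Or.inl rfl)
  · rintro (rfl | rfl | rfl | rfl) x y <;>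
      refine Finset.prod_congr rfl fun n _ => ?_ <;>
      simp [Matrix.cons_val_zero, Matrix.cons_val_one, Matrix.head_cons] <;> ring
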